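/- Let G be a group and let ℱ be a collection of pairwise commensurable subgroups of G. Then the function d(H,K) := Real.log (c(H,K)) is a metric on ℱ; that is, for all H, K, L ∈ ℱ: (i) d(H,K) ≥ 0, (ii) d(H,K) = 0 if and only if H = K (equivalently, c(H,K) = 1 iff H = K), (iii) d(H,K) = d(K,H), and (iv) d(H,K) ≤ d(H,L) + d(L,K) (equivalently, c(H,K) ≤ c(H,L) · c(L,K)). -/

import Mathlib

/-- The commensurability index of two subgroups `A`, `B` of a group `G`:
`c(A,B) = [A : A ⊓ B] * [B : A ⊓ B]`. Following Mathlib's convention for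
`Subgroup.relindex`, a value of `0` means the index is infinite. -/
noncomputable def commIndex {G : Type*} [Group G] (A B : Subgroup G) : ℕ :=
  (A ⊓ B).relIndex A * (A ⊓ B).relIndex B

lemma commIndex_eq {G : Type*} [Group G] (A B : Subgroup G) :
    commIndex A B = B.relIndex A * A.relIndex B := by
  rw [commIndex, Subgroup.inf_relIndex_left, Subgroup.inf_relIndex_right]

/-- Key triangle-type estimate on relindex. -/
lemma relindex_triangle {G : Type*} [Group G] {H K L : Subgroup G}
    (h1 : L.relIndex H ≠ 0) (h2 : K.relIndex L ≠ 0) :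
    K.relIndex H ≤ L.relIndex H * K.relIndex L := by
  have hne : K.relIndex (L ⊓ H) ≠ 0 := fun h =>
    h2 (by simpa using Subgroup.relIndex_eq_zero_of_le_right (inf_le_left : L ⊓ H ≤ L) h)
  have key : K.relIndex (L ⊓ H) * L.relIndex H = (K ⊓ L).relIndex H :=
    Subgroup.relIndex_inf_mul_relIndex K L H
  have hKL_ne : (K ⊓ L).relIndex H ≠ 0 := by
    rw [← key]; exact mul_ne_zero hne h1
  calc K.relIndex H ≤ (K ⊓ L).relIndex H :=
        Subgroup.relIndex_le_of_le_left (inf_le_left : K ⊓ L ≤ K) hKL_ne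
    _ = K.relIndex (L ⊓ H) * L.relIndex H := key.symm
    _ ≤ K.relIndex L * L.relIndex H := by
        exact Nat.mul_le_mul_right _
          (Subgroup.relIndex_le_of_le_right (inf_le_left : L ⊓ H ≤ L) h2)
    _ = L.relIndex H * K.relIndex L := mul_comm _ _

/-- On a family `ℱ` of pairwise commensurable subgroups of a group `G`, the
function `d(H,K) := log c(H,K)` is a metric: it is nonnegative, vanishes exactly
on the diagonal, is symmetric, and satisfies the triangle inequality. -/
theorem commIndex_log_metric {G : Type*} [Group G] (ℱ : Set (Subgroup G))
    (hcomm : ∀ H ∈ ℱ, ∀ K ∈ ℱ, commIndex H K ≠ 0) :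
    ∀ H ∈ ℱ, ∀ K ∈ ℱ, ∀ L ∈ ℱ,
      0 ≤ Real.log (commIndex H K) ∧
      (Real.log (commIndex H K) = 0 ↔ H = K) ∧
      Real.log (commIndex H K) = Real.log (commIndex K H) ∧
      Real.log (commIndex H K) ≤
        Real.log (commIndex H L) + Real.log (commIndex L K) := by
  intro H hH K hK L hL
  have hsymm : ∀ A B : Subgroup G, commIndex A B = commIndex B A := fun A B => by
    rw [commIndex_eq, commIndex_eq, mul_comm]
  have hHK := hcomm H hH K hK
  have hHL := hcomm H hH L hL
  have hLK := hcomm L hL K hK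
  -- individual relindex nonzero facts
  have fHK : K.relIndex H ≠ 0 ∧ H.relIndex K ≠ 0 := by
    rw [commIndex_eq] at hHK; exact ⟨left_ne_zero_of_mul hHK, right_ne_zero_of_mul hHK⟩
  have fHL : L.relIndex H ≠ 0 ∧ H.relIndex L ≠ 0 := by
    rw [commIndex_eq] at hHL; exact ⟨left_ne_zero_of_mul hHL, right_ne_zero_of_mul hHL⟩
  have fLK : K.relIndex L ≠ 0 ∧ L.relIndex K ≠ 0 := by
    rw [commIndex_eq] at hLK; exact ⟨left_ne_zero_of_mul hLK, right_ne_zero_of_mul hLK⟩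
  have h1 : (1 : ℕ) ≤ commIndex H K := Nat.one_le_iff_ne_zero.2 hHK
  have hpos : (0 : ℝ) < (commIndex H K : ℝ) := by exact_mod_cast Nat.pos_of_ne_zero hHK
  refine ⟨?_, ?_, ?_, ?_⟩
  · exact Real.log_nonneg (by exact_mod_cast h1)
  · constructor
    · intro h
      have : (commIndex H K : ℝ) = 1 := by
        rcases Real.log_eq_zero.mp h with h0 | h0 | h0
        · exact absurd h0 (ne_of_gt hpos)
        · exact h0
        · exfalso; rw [h0] at hpos; linarith
      have hone : commIndex H K = 1 := by exact_mod_cast this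
      rw [commIndex_eq] at hone
      have := Nat.eq_one_of_mul_eq_one_right hone
      have h2 := Nat.eq_one_of_mul_eq_one_left hone
      have hKH : K ≤ H := Subgroup.relIndex_eq_one.mp h2
      have hHK' : H ≤ K := Subgroup.relIndex_eq_one.mp this
      exact le_antisymm hHK' hKH
    · rintro rfl
      rw [commIndex_eq, Subgroup.relIndex_self, mul_one, Nat.cast_one, Real.log_one]
  · rw [hsymm]
  · have tri1 : K.relIndex H ≤ L.relIndex H * K.relIndex L :=
      relindex_triangle fHL.1 fLK.1
    have tri2 : H.relIndex K ≤ L.relIndex K * H.relIndex L :=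
      relindex_triangle fLK.2 fHL.2
    have hmain : commIndex H K ≤ commIndex H L * commIndex L K := by
      rw [commIndex_eq, commIndex_eq, commIndex_eq]
      calc K.relIndex H * H.relIndex K
          ≤ (L.relIndex H * K.relIndex L) * (L.relIndex K * H.relIndex L) :=
            Nat.mul_le_mul tri1 tri2
        _ = L.relIndex H * H.relIndex L * (K.relIndex L * L.relIndex K) := by ring
    have hposR : (0 : ℝ) < ((commIndex H L * commIndex L K : ℕ) : ℝ) := by
      exact_mod_cast Nat.pos_of_ne_zero (mul_ne_zero hHL hLK)
    have step : Real.log (commIndex H K) ≤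
        Real.log ((commIndex H L * commIndex L K : ℕ) : ℝ) := by
      apply Real.log_le_log hpos
      exact_mod_cast hmain
    calc Real.log (commIndex H K)
        ≤ Real.log ((commIndex H L * commIndex L K : ℕ) : ℝ) := step
      _ = Real.log (commIndex H L) + Real.log (commIndex L K) := by
          have a1 : ((commIndex H L : ℕ) : ℝ) ≠ 0 := by exact_mod_cast hHL
          have a2 : ((commIndex L K : ℕ) : ℝ) ≠ 0 := by exact_mod_cast hLK
          rw [Nat.cast_mul]
          exact Real.log_mul a1 a2
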